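/- Let (X,d) be a metric space with a Borel measure m satisfying the symmetric Vitali property on an open set, and suppose m(B(x,r)) ≥ (1-ε)ω_n rⁿ for all balls B(x,r) contained in an open set Ω. Then m(Ω) ≥ (1-ε)·Hⁿ(Ω). -/

import Mathlib

open MeasureTheory Metric
open scoped ENNReal NNReal

/-- The volume of the unit ball in `ℝⁿ`. -/
noncomputable def eucVol (n : ℕ) : ENNReal :=
  MeasureTheory.volume (Metric.ball (0 : EuclideanSpace ℝ (Fin n)) 1)

/-- The `n`-dimensional Hausdorff measure, normalized so that it coincides with
Lebesgue measure on `ℝⁿ` (gauge `ω_n (diam/2)ⁿ`). -/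
noncomputable def hausdorffN (n : ℕ) {X : Type*} [EMetricSpace X] [MeasurableSpace X]
    [BorelSpace X] : Measure X :=
  (eucVol n / 2 ^ n) • MeasureTheory.Measure.hausdorffMeasure (n : ℝ)

/-- The symmetric Vitali property of a measure `m` on a set `Ω`: from every fine cover
of `Ω` by closed balls centered at points of `Ω` one can extract a countable pairwise
disjoint subfamily covering `Ω` up to an `m`-null set. -/
def SymmetricVitaliProperty {X : Type*} [MetricSpace X] [MeasurableSpace X]
    (m : Measure X) (Ω : Set X) : Prop :=
  ∀ F : Set (X × ℝ),
    (∀ p ∈ F, p.1 ∈ Ω ∧ 0 < p.2) →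
    (∀ x ∈ Ω, ∀ δ : ℝ, 0 < δ → ∃ p ∈ F, p.1 = x ∧ p.2 ≤ δ) →
    ∃ G ⊆ F, G.Countable ∧
      (G.PairwiseDisjoint fun p => Metric.closedBall p.1 p.2) ∧
      m (Ω \ ⋃ p ∈ G, Metric.closedBall p.1 p.2) = 0

open Filter Set Topology in
/-- if `m` has the symmetric Vitali property on an open set `Ω` and
`m(B(x,r)) ≥ (1-ε) ω_n rⁿ` for all balls contained in `Ω`, then
`m(Ω) ≥ (1-ε)·Hⁿ(Ω)`. -/
theorem stmt3 {X : Type*} [MetricSpace X] [MeasurableSpace X] [BorelSpace X]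
    (n : ℕ) (m : Measure X) (ε : ℝ) (hε : 0 < ε)
    (Ω : Set X) (hΩ : IsOpen Ω)
    (hvitali : SymmetricVitaliProperty m Ω)
    (hball : ∀ (x : X) (r : ℝ), 0 < r → Metric.ball x r ⊆ Ω →
      ENNReal.ofReal (1 - ε) * eucVol n * ENNReal.ofReal r ^ n ≤ m (Metric.ball x r)) :
    ENNReal.ofReal (1 - ε) * hausdorffN n Ω ≤ m Ω := by
  classical
  rcases le_or_gt (1 : ℝ) ε with h1 | h1
  · have h0 : ENNReal.ofReal (1 - ε) = 0 := ENNReal.ofReal_eq_zero.mpr (by linarith)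
    simp [h0]
  rcases eq_top_or_lt_top (m Ω) with htop | hfin
  · rw [htop]; exact le_top
  have hΩm : MeasurableSet Ω := hΩ.measurableSet
  set c : ℝ≥0∞ := ENNReal.ofReal (1 - ε) with hc
  have hc0 : c ≠ 0 := by
    simp only [hc, ne_eq, ENNReal.ofReal_eq_zero, not_le]; linarith
  have hω0 : eucVol n ≠ 0 :=
    (measure_ball_pos volume (0 : EuclideanSpace ℝ (Fin n)) one_pos).ne'
  have hωT : eucVol n ≠ ⊤ := measure_ball_lt_top.ne
  have h2n0 : ((2 : ℝ≥0∞) ^ n) ≠ 0 := pow_ne_zero _ (by norm_num)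
  have h2nT : ((2 : ℝ≥0∞) ^ n) ≠ ⊤ := ENNReal.pow_ne_top (by norm_num)
  have h5n0 : ((5 : ℝ≥0∞) ^ n) ≠ 0 := pow_ne_zero _ (by norm_num)
  have h5nT : ((5 : ℝ≥0∞) ^ n) ≠ ⊤ := ENNReal.pow_ne_top (by norm_num)
  set a : ℝ≥0∞ := c * (eucVol n / 2 ^ n) with haa
  -- the basic gauge estimate for closed balls
  have gauge : ∀ (x : X) (r : ℝ), 0 ≤ r →
      a * EMetric.diam (closedBall x r) ^ (n : ℝ) ≤ c * eucVol n * ENNReal.ofReal r ^ n := by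
    intro x r hr
    have hdiam : EMetric.diam (closedBall x r) ≤ ENNReal.ofReal (2 * r) := by
      refine Metric.ediam_le_of_forall_dist_le ?_
      intro y hy z hz
      have h1 : dist y x ≤ r := mem_closedBall.mp hy
      have h2 : dist z x ≤ r := mem_closedBall.mp hz
      calc dist y z ≤ dist y x + dist x z := dist_triangle _ _ _
        _ ≤ r + r := add_le_add h1 (by rwa [dist_comm])
        _ = 2 * r := by ring
    have h2r : ENNReal.ofReal (2 * r) = 2 * ENNReal.ofReal r := by
      rw [ENNReal.ofReal_mul (by norm_num)]; norm_num
    have hd : EMetric.diam (closedBall x r) ^ (n : ℝ) ≤ (2 * ENNReal.ofReal r) ^ (n : ℝ) :=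
      ENNReal.rpow_le_rpow (h2r ▸ hdiam) (Nat.cast_nonneg n)
    have h2 : ((2 : ℝ≥0∞) * ENNReal.ofReal r) ^ (n : ℝ) = 2 ^ n * ENNReal.ofReal r ^ n := by
      rw [ENNReal.rpow_natCast, mul_pow]
    calc a * EMetric.diam (closedBall x r) ^ (n : ℝ)
        ≤ a * (2 ^ n * ENNReal.ofReal r ^ n) := by
          rw [← h2]; exact mul_le_mul_right hd a
      _ = c * (eucVol n / 2 ^ n * 2 ^ n) * ENNReal.ofReal r ^ n := by rw [haa]; ring
      _ = c * eucVol n * ENNReal.ofReal r ^ n := by rw [ENNReal.div_mul_cancel h2n0 h2nT]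
  -- the main covering estimate, for each `δ > 0`
  have key : ∀ δ : ℝ, 0 < δ → ∃ C : Set (X × ℝ), C.Countable ∧
      (∀ p ∈ C, EMetric.diam (closedBall p.1 p.2) ≤ ENNReal.ofReal δ) ∧
      (Ω ⊆ ⋃ p ∈ C, closedBall p.1 p.2) ∧
      a * ∑' p : C, EMetric.diam (closedBall (p : X × ℝ).1 (p : X × ℝ).2) ^ (n : ℝ)
        ≤ m Ω + ENNReal.ofReal δ := by
    intro δ hδ
    set F : Set (X × ℝ) :=
      {p | p.1 ∈ Ω ∧ 0 < p.2 ∧ p.2 ≤ δ / 2 ∧ closedBall p.1 p.2 ⊆ Ω} with hF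
    have hfine : ∀ x ∈ Ω, ∀ δ' : ℝ, 0 < δ' → ∃ p ∈ F, p.1 = x ∧ p.2 ≤ δ' := by
      intro x hx δ' hδ'
      obtain ⟨ρ, hρ0, hρ⟩ := Metric.isOpen_iff.1 hΩ x hx
      refine ⟨(x, min (min δ' (δ / 2)) (ρ / 2)),
        ⟨hx, lt_min (lt_min hδ' (half_pos hδ)) (half_pos hρ0),
          (min_le_left _ _).trans (min_le_right _ _), ?_⟩, rfl,
          (min_le_left _ _).trans (min_le_left _ _)⟩
      refine (closedBall_subset_closedBall (min_le_right _ _)).trans ?_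
      exact (closedBall_subset_ball (by linarith)).trans hρ
    obtain ⟨G, hGF, hGc, hGd, hGnull⟩ := hvitali F (fun p hp => ⟨hp.1, hp.2.1⟩) hfine
    -- estimate for the main family G
    have hGsum : a * ∑' p : G,
        EMetric.diam (closedBall (p : X × ℝ).1 (p : X × ℝ).2) ^ (n : ℝ) ≤ m Ω := by
      rw [← ENNReal.tsum_mul_left]
      have hle : ∀ p : G, a * EMetric.diam (closedBall (p : X × ℝ).1 (p : X × ℝ).2) ^ (n : ℝ)
          ≤ m (closedBall (p : X × ℝ).1 (p : X × ℝ).2) := by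
        intro p
        obtain ⟨hp1, hp2, hp3, hp4⟩ := hGF p.2
        refine (gauge _ _ hp2.le).trans ?_
        refine (hball _ _ hp2 (ball_subset_closedBall.trans hp4)).trans ?_
        exact measure_mono ball_subset_closedBall
      refine (ENNReal.tsum_le_tsum hle).trans ?_
      rw [← measure_biUnion hGc hGd (fun p _ => measurableSet_closedBall)]
      exact measure_mono (iUnion₂_subset fun p hp => (hGF hp).2.2.2)
    -- the exceptional set
    set Z : Set X := Ω \ ⋃ p ∈ G, closedBall p.1 p.2 with hZ
    have hZm : MeasurableSet Z :=
      hΩm.diff (MeasurableSet.biUnion hGc fun p _ => measurableSet_closedBall)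
    haveI : IsFiniteMeasure (m.restrict Ω) :=
      ⟨by rwa [Measure.restrict_apply_univ]⟩
    have hZ0 : m.restrict Ω Z = 0 := by
      rw [Measure.restrict_apply hZm]
      exact measure_mono_null inter_subset_left hGnull
    have hη : (0 : ℝ≥0∞) < ENNReal.ofReal δ / 5 ^ n :=
      ENNReal.div_pos (ENNReal.ofReal_pos.mpr hδ).ne' h5nT
    obtain ⟨U, hZU, hUo, hUlt⟩ :=
      Set.exists_isOpen_lt_of_lt (μ := m.restrict Ω) Z _ (by rw [hZ0]; exact hη)
    -- choose small balls at points of Z inside U ∩ Ω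
    have hsel : ∀ z ∈ Z, ∃ ρ : ℝ, 0 < ρ ∧ ρ ≤ δ / 10 ∧ ball z ρ ⊆ U ∩ Ω := by
      intro z hz
      obtain ⟨ρ, hρ0, hρ⟩ := Metric.isOpen_iff.1 (hUo.inter hΩ) z ⟨hZU hz, hz.1⟩
      exact ⟨min (δ / 10) (ρ / 2), lt_min (by positivity) (half_pos hρ0), min_le_left _ _,
        (ball_subset_ball ((min_le_right _ _).trans (by linarith))).trans hρ⟩
    choose! ρfn hρ0 hρδ hρU using hsel
    obtain ⟨u, huZ, hud, hucov⟩ :=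
      Vitali.exists_disjoint_subfamily_covering_enlargement_closedBall Z id ρfn (δ / 10)
        (fun z hz => hρδ z hz) 5 (by norm_num)
    simp only [id] at hud hucov
    have hmes : ∀ b : u, MeasurableSet (ball (b : X) (ρfn b)) := fun b => measurableSet_ball
    have hdisj : Pairwise (Function.onFun Disjoint fun b : u => ball (b : X) (ρfn b)) := by
      have h1 : u.PairwiseDisjoint fun z => ball z (ρfn z) :=
        hud.mono fun z => ball_subset_closedBall
      exact h1.subtype _ _
    have hballs_sub : ∀ b : u, ball (b : X) (ρfn b) ⊆ U ∩ Ω :=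
      fun b => hρU b (huZ b.2)
    have hpos : ∀ b : u, 0 < m (ball (b : X) (ρfn b)) := by
      intro b
      have h0 := hρ0 b (huZ b.2)
      refine lt_of_lt_of_le ?_
        (hball (b : X) (ρfn b) h0 ((hballs_sub b).trans inter_subset_right))
      exact ENNReal.mul_pos (mul_ne_zero hc0 hω0)
        (pow_ne_zero _ (ENNReal.ofReal_pos.mpr h0).ne')
    have hucnt : u.Countable := by
      have hne : m (⋃ b : u, ball (b : X) (ρfn b)) ≠ ⊤ := by
        refine (lt_of_le_of_lt (measure_mono ?_) hfin).ne
        exact iUnion_subset fun b => (hballs_sub b).trans inter_subset_right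
      have hcnt0 := MeasureTheory.Measure.countable_meas_pos_of_disjoint_of_meas_iUnion_ne_top
        (μ := m) (As := fun b : u => ball (b : X) (ρfn b)) hmes hdisj hne
      have huniv : {i : u | 0 < m (ball (i : X) (ρfn i))} = Set.univ :=
        Set.eq_univ_of_forall hpos
      rw [huniv] at hcnt0
      exact Set.countable_coe_iff.mp (Set.countable_univ_iff.mp hcnt0)
    -- estimate for the enlarged balls
    have husum : a * ∑' b : u, EMetric.diam (closedBall (b : X) (5 * ρfn b)) ^ (n : ℝ)
        ≤ ENNReal.ofReal δ := by
      rw [← ENNReal.tsum_mul_left]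
      have hle : ∀ b : u, a * EMetric.diam (closedBall (b : X) (5 * ρfn b)) ^ (n : ℝ)
          ≤ 5 ^ n * m (ball (b : X) (ρfn b)) := by
        intro b
        have h0 := hρ0 b (huZ b.2)
        refine (gauge _ _ (by positivity)).trans ?_
        have h5 : ENNReal.ofReal (5 * ρfn b) = 5 * ENNReal.ofReal (ρfn b) := by
          rw [ENNReal.ofReal_mul (by norm_num)]; norm_num
        rw [h5, mul_pow]
        calc c * eucVol n * (5 ^ n * ENNReal.ofReal (ρfn b) ^ n)
            = 5 ^ n * (c * eucVol n * ENNReal.ofReal (ρfn b) ^ n) := by ring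
          _ ≤ 5 ^ n * m (ball (b : X) (ρfn b)) :=
              mul_le_mul_right
                (hball _ _ h0 ((hballs_sub b).trans inter_subset_right)) _
      refine (ENNReal.tsum_le_tsum hle).trans ?_
      rw [ENNReal.tsum_mul_left]
      have h1 : ∑' b : u, m (ball (b : X) (ρfn b)) ≤ m.restrict Ω U := by
        refine le_trans (tsum_meas_le_meas_iUnion_of_disjoint m hmes hdisj) ?_
        rw [Measure.restrict_apply' hΩm]
        exact measure_mono (iUnion_subset fun b => hballs_sub b)
      calc (5 : ℝ≥0∞) ^ n * ∑' b : u, m (ball (b : X) (ρfn b))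
          ≤ 5 ^ n * (ENNReal.ofReal δ / 5 ^ n) := mul_le_mul_right (h1.trans hUlt.le) _
        _ = ENNReal.ofReal δ := ENNReal.mul_div_cancel h5n0 h5nT
    -- assemble the cover
    refine ⟨G ∪ (fun b => (b, 5 * ρfn b)) '' u, hGc.union (hucnt.image _), ?_, ?_, ?_⟩
    · rintro p (hp | ⟨b, hb, rfl⟩)
      · obtain ⟨-, hp2, hp3, -⟩ := hGF hp
        refine le_trans (Metric.ediam_le_of_forall_dist_le ?_) (ENNReal.ofReal_le_ofReal le_rfl)
        intro y hy z hz
        have h1 : dist y p.1 ≤ p.2 := mem_closedBall.mp hy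
        have h2 : dist z p.1 ≤ p.2 := mem_closedBall.mp hz
        calc dist y z ≤ dist y p.1 + dist p.1 z := dist_triangle _ _ _
          _ ≤ p.2 + p.2 := add_le_add h1 (by rwa [dist_comm])
          _ ≤ δ := by linarith
      · have hbZ := huZ hb
        have h0 := hρ0 b hbZ
        have hbδ := hρδ b hbZ
        refine Metric.ediam_le_of_forall_dist_le ?_
        intro y hy z hz
        have h1 : dist y b ≤ 5 * ρfn b := mem_closedBall.mp hy
        have h2 : dist z b ≤ 5 * ρfn b := mem_closedBall.mp hz
        calc dist y z ≤ dist y b + dist b z := dist_triangle _ _ _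
          _ ≤ 5 * ρfn b + 5 * ρfn b := add_le_add h1 (by rwa [dist_comm])
          _ ≤ δ := by linarith
    · intro x hx
      by_cases hxG : x ∈ ⋃ p ∈ G, closedBall p.1 p.2
      · obtain ⟨p, hp, hxp⟩ := mem_iUnion₂.mp hxG
        exact mem_biUnion (mem_union_left _ hp) hxp
      · have hxZ : x ∈ Z := ⟨hx, hxG⟩
        obtain ⟨b, hb, hsub⟩ := hucov x hxZ
        have hxb : x ∈ closedBall x (ρfn x) := mem_closedBall_self (hρ0 x hxZ).le
        exact mem_biUnion (mem_union_right _ (mem_image_of_mem _ hb)) (hsub hxb)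
    · have hinj : Set.InjOn (fun b => (b, 5 * ρfn b)) u := by
        intro b _ b' _ h
        exact congrArg Prod.fst h
      have himg : ∑' p : ((fun b => (b, 5 * ρfn b)) '' u),
            EMetric.diam (closedBall (p : X × ℝ).1 (p : X × ℝ).2) ^ (n : ℝ)
          = ∑' b : u, EMetric.diam (closedBall (b : X) (5 * ρfn b)) ^ (n : ℝ) :=
        tsum_image (fun p : X × ℝ => EMetric.diam (closedBall p.1 p.2) ^ (n : ℝ)) hinj
      have split := ENNReal.tsum_union_le
        (fun p : X × ℝ => EMetric.diam (closedBall p.1 p.2) ^ (n : ℝ)) G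
        ((fun b => (b, 5 * ρfn b)) '' u)
      calc a * ∑' p : ↑(G ∪ (fun b => (b, 5 * ρfn b)) '' u),
            EMetric.diam (closedBall (p : X × ℝ).1 (p : X × ℝ).2) ^ (n : ℝ)
          ≤ a * (∑' p : G, EMetric.diam (closedBall (p : X × ℝ).1 (p : X × ℝ).2) ^ (n : ℝ)
              + ∑' b : u, EMetric.diam (closedBall (b : X) (5 * ρfn b)) ^ (n : ℝ)) := by
            rw [← himg]; exact mul_le_mul_right split a
        _ = a * ∑' p : G, EMetric.diam (closedBall (p : X × ℝ).1 (p : X × ℝ).2) ^ (n : ℝ)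
              + a * ∑' b : u, EMetric.diam (closedBall (b : X) (5 * ρfn b)) ^ (n : ℝ) := by
            rw [mul_add]
        _ ≤ m Ω + ENNReal.ofReal δ := add_le_add hGsum husum
  -- put the covers together as δ → 0
  choose C hCc hCd hCcov hCsum using fun k : ℕ => key (1 / (k + 1)) (by positivity)
  haveI : ∀ k, Countable ↥(C k) := fun k => (hCc k).to_subtype
  have htend : Tendsto (fun k : ℕ => ENNReal.ofReal (1 / (k + 1))) atTop (𝓝 0) := by
    have h := ENNReal.tendsto_ofReal (tendsto_one_div_add_atTop_nhds_zero_nat)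
    simpa using h
  have hμH : μH[(n : ℝ)] Ω ≤ liminf (fun k =>
      ∑' p : C k, EMetric.diam (closedBall (p : X × ℝ).1 (p : X × ℝ).2) ^ (n : ℝ)) atTop := by
    refine MeasureTheory.Measure.hausdorffMeasure_le_liminf_tsum (n : ℝ) Ω
      (fun k : ℕ => ENNReal.ofReal (1 / (k + 1))) htend
      (fun k (p : C k) => closedBall (p : X × ℝ).1 (p : X × ℝ).2) ?_ ?_
    · exact Eventually.of_forall fun k p => hCd k p p.2
    · refine Eventually.of_forall fun k x hx => ?_
      obtain ⟨p, hp, hxp⟩ := mem_iUnion₂.mp (hCcov k hx)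
      exact mem_iUnion.mpr ⟨⟨p, hp⟩, hxp⟩
  calc c * hausdorffN n Ω = a * μH[(n : ℝ)] Ω := by
        simp only [hausdorffN, Measure.smul_apply, smul_eq_mul, haa]; ring
    _ ≤ a * liminf (fun k =>
          ∑' p : C k, EMetric.diam (closedBall (p : X × ℝ).1 (p : X × ℝ).2) ^ (n : ℝ)) atTop :=
        mul_le_mul_right hμH a
    _ ≤ liminf (fun k => a *
          ∑' p : C k, EMetric.diam (closedBall (p : X × ℝ).1 (p : X × ℝ).2) ^ (n : ℝ)) atTop := by
        have h := ENNReal.le_liminf_mul (f := atTop) (u := fun _ : ℕ => a)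
          (v := fun k => ∑' p : C k,
            EMetric.diam (closedBall (p : X × ℝ).1 (p : X × ℝ).2) ^ (n : ℝ))
        simpa [liminf_const, Pi.mul_def] using h
    _ ≤ liminf (fun k : ℕ => m Ω + ENNReal.ofReal (1 / (k + 1))) atTop :=
        liminf_le_liminf (Eventually.of_forall fun k => hCsum k)
    _ = m Ω := by
        have ht : Tendsto (fun k : ℕ => m Ω + ENNReal.ofReal (1 / (k + 1))) atTop
            (𝓝 (m Ω)) := by
          simpa using tendsto_const_nhds.add htend
        exact ht.liminf_eq
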